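/- If a connected regular graph G is factored into graphs H and K, then both H and K are regular. -/
import Mathlib


open SimpleGraph Matrix

lemma aux_reg {n : ℕ} (G H : SimpleGraph (Fin n))
    [DecidableRel G.Adj] [DecidableRel H.Adj]
    (hG : G.Connected) {r : ℕ} (hreg : G.IsRegularOfDegree r)
    (hcomm : H.adjMatrix ℝ * G.adjMatrix ℝ = G.adjMatrix ℝ * H.adjMatrix ℝ) :
    ∃ s, H.IsRegularOfDegree s := by
  haveI : Nonempty (Fin n) := hG.nonempty
  set d : Fin n → ℝ := fun i => (H.degree i : ℝ) with hd
  -- key: A *ᵥ d = r • d entrywise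
  have hAd : ∀ i, ∑ j ∈ G.neighborFinset i, d j = r * d i := by
    intro i
    have h1 : (H.adjMatrix ℝ * G.adjMatrix ℝ) *ᵥ (Function.const _ (1:ℝ)) =
        (G.adjMatrix ℝ * H.adjMatrix ℝ) *ᵥ (Function.const _ (1:ℝ)) := by rw [hcomm]
    have h2 := congrFun h1 i
    rw [← mulVec_mulVec, ← mulVec_mulVec] at h2
    have hGone : G.adjMatrix ℝ *ᵥ (Function.const _ (1:ℝ)) = Function.const _ (r:ℝ) := by
      funext v
      rw [adjMatrix_mulVec_const_apply_of_regular hreg, mul_one]; rfl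
    rw [hGone] at h2
    have hHone : H.adjMatrix ℝ *ᵥ (Function.const _ (1:ℝ)) = d := by
      funext v
      rw [adjMatrix_mulVec_const_apply, mul_one]
    rw [hHone] at h2
    have hL : (H.adjMatrix ℝ *ᵥ Function.const _ (r:ℝ)) i = (r : ℝ) * d i := by
      rw [adjMatrix_mulVec_const_apply, hd, mul_comm]
    rw [hL] at h2
    rw [h2, adjMatrix_mulVec_apply]
  -- pick maximizer
  obtain ⟨i₀, -, hmax⟩ := Finset.exists_max_image Finset.univ d Finset.univ_nonempty
  have hmax' : ∀ j, d j ≤ d i₀ := fun j => hmax j (Finset.mem_univ j)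
  -- adjacency preserves max
  have step : ∀ i j, d i = d i₀ → G.Adj i j → d j = d i₀ := by
    intro i j hi hij
    by_contra hne
    have hjlt : d j < d i₀ := lt_of_le_of_ne (hmax' j) hne
    have hlt : ∑ k ∈ G.neighborFinset i, d k < ∑ k ∈ G.neighborFinset i, d i₀ :=
      Finset.sum_lt_sum (fun k _ => hmax' k) ⟨j, (G.mem_neighborFinset i j).2 hij, hjlt⟩
    rw [Finset.sum_const, nsmul_eq_mul] at hlt
    rw [hAd i, hi] at hlt
    rw [(G.card_neighborFinset_eq_degree i : _), hreg i] at hlt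
    exact lt_irrefl _ hlt
  -- connectivity: d is constant
  have key : ∀ u v : Fin n, ∀ _ : G.Walk u v, d u = d i₀ → d v = d i₀ := by
    intro u v w
    induction w with
    | nil => exact id
    | cons hab p ih => exact fun hu => ih (step _ _ hu hab)
  have hconst : ∀ v, d v = d i₀ := fun v => key i₀ v (hG i₀ v).some rfl
  refine ⟨H.degree i₀, fun v => ?_⟩
  have := hconst v
  simp only [hd] at this
  exact_mod_cast this

theorem stmt7 {n : ℕ} (G H K : SimpleGraph (Fin n))
    [DecidableRel G.Adj] [DecidableRel H.Adj] [DecidableRel K.Adj]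
    (hG : G.Connected) (hreg : ∃ r, G.IsRegularOfDegree r)
    (hfac : G.adjMatrix ℝ = H.adjMatrix ℝ * K.adjMatrix ℝ) :
    (∃ r, H.IsRegularOfDegree r) ∧ (∃ s, K.IsRegularOfDegree s) := by
  obtain ⟨r, hr⟩ := hreg
  have hsym : H.adjMatrix ℝ * K.adjMatrix ℝ = K.adjMatrix ℝ * H.adjMatrix ℝ := by
    have := congrArg Matrix.transpose hfac
    rw [transpose_adjMatrix, Matrix.transpose_mul, transpose_adjMatrix,
      transpose_adjMatrix] at this
    rw [← hfac, this]
  constructor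
  · refine aux_reg G H hG hr ?_
    rw [hfac, hsym, ← mul_assoc, hsym]
  · refine aux_reg G K hG hr ?_
    rw [hfac, ← mul_assoc, hsym]
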